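/- Let G be a finite group, let p be a prime, and let u = ∑_{x∈G} u_x x be a normalized unit of finite order n in the integral group ring ℤG (i.e., ∑ u_x = 1 and u is invertible with uⁿ = 1). If u ≠ 1, then the coefficient of the identity element of G in u is 0. -/

import Mathlib

open Polynomial Matrix

/-- A multiset of nonnegative reals with zero sum is all zero. -/
private lemma bh_multiset_zero {s : Multiset ℝ} (h0 : ∀ x ∈ s, 0 ≤ x) (hs : s.sum = 0) :
    ∀ x ∈ s, x = 0 := by
  induction s using Multiset.induction with
  | empty => intro x hx; simp at hx
  | cons a t ih =>
    have ha : 0 ≤ a := h0 a (Multiset.mem_cons_self a t)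
    have ht : 0 ≤ t.sum := Multiset.sum_nonneg fun x hx => h0 x (Multiset.mem_cons_of_mem hx)
    rw [Multiset.sum_cons] at hs
    have ha0 : a = 0 := le_antisymm (by linarith) ha
    have hts : t.sum = 0 := by linarith
    intro x hx
    rcases Multiset.mem_cons.mp hx with h | h
    · rw [h, ha0]
    · exact ih (fun y hy => h0 y (Multiset.mem_cons_of_mem hy)) hts x h

private lemma bh_eval_charpoly {m : Type*} [Fintype m] [DecidableEq m]
    (M : Matrix m m ℂ) (r : ℂ) :
    M.charpoly.eval r = (r • (1 : Matrix m m ℂ) - M).det := by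
  rw [Matrix.charpoly, ← Polynomial.coe_evalRingHom, RingHom.map_det]
  congr 1
  ext i j
  by_cases h : i = j <;>
    simp [Matrix.charmatrix_apply, h, Matrix.one_apply, Matrix.diagonal_apply]

/-- Berman–Higman theorem: a nontrivial normalized torsion unit in the integral
group ring of a finite group has coefficient `0` at the identity element. -/
theorem berman_higman {G : Type*} [Group G] [Fintype G]
    (u : MonoidAlgebra ℤ G) (n : ℕ) (hn : 0 < n) (hun : u ^ n = 1)
    (haug : (u.coeff.sum fun _ c => c) = 1) (hne : u ≠ 1) :
    u.coeff 1 = 0 := by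
  classical
  by_contra ht0
  set t : ℤ := u.coeff 1 with htdef
  -- the coefficient extension ring hom ℤG → ℂG
  have hcomm : ∀ (a : ℤ) (g : G),
      Commute ((MonoidAlgebra.singleOneRingHom.comp (Int.castRingHom ℂ)) a)
        ((MonoidAlgebra.of ℂ G) g) := by
    intro a g
    show MonoidAlgebra.single 1 ((a : ℂ)) * MonoidAlgebra.single g 1 =
      MonoidAlgebra.single g 1 * MonoidAlgebra.single 1 ((a : ℂ))
    rw [MonoidAlgebra.single_mul_single, MonoidAlgebra.single_mul_single]
    simp
  let ψ : MonoidAlgebra ℤ G →+* MonoidAlgebra ℂ G :=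
    MonoidAlgebra.liftNCRingHom (MonoidAlgebra.singleOneRingHom.comp (Int.castRingHom ℂ))
      (MonoidAlgebra.of ℂ G) hcomm
  have hψ : ∀ (w : MonoidAlgebra ℤ G) (x : G), (ψ w).coeff x = (w.coeff x : ℂ) := by
    intro w
    induction w using MonoidAlgebra.induction_linear with
    | zero => intro x; simp
    | add f g hf hg =>
      intro x
      rw [map_add]
      show (ψ f).coeff x + (ψ g).coeff x = _
      rw [hf, hg, MonoidAlgebra.coeff_add, Finsupp.add_apply]; push_cast; ring
    | single g a =>
      intro x
      have h1 : ψ (MonoidAlgebra.single g a) = MonoidAlgebra.single 1 ((a : ℂ)) *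
          MonoidAlgebra.single g 1 := by
        simp [ψ, MonoidAlgebra.liftNCRingHom, MonoidAlgebra.liftNC_single,
          MonoidAlgebra.singleOneRingHom, MonoidAlgebra.of_apply,
          MonoidAlgebra.intCast_def, MonoidAlgebra.single_mul_single]
      rw [h1, MonoidAlgebra.single_mul_single, one_mul, mul_one]
      simp [MonoidAlgebra.coeff_single_apply, Finsupp.single_apply]
  set v : MonoidAlgebra ℂ G := ψ u with hvdef
  have hvn : v ^ n = 1 := by rw [hvdef, ← map_pow, hun, _root_.map_one]
  -- left multiplication endomorphism and its matrix
  let b : Module.Basis G ℂ (MonoidAlgebra ℂ G) := MonoidAlgebra.basis G ℂ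
  let f : Module.End ℂ (MonoidAlgebra ℂ G) := Algebra.lmul ℂ (MonoidAlgebra ℂ G) v
  let M : Matrix G G ℂ := LinearMap.toMatrixAlgEquiv b f
  have hMn : M ^ n = 1 := by
    show (LinearMap.toMatrixAlgEquiv b f) ^ n = 1
    rw [← map_pow, show f ^ n = 1 by
      show (Algebra.lmul ℂ (MonoidAlgebra ℂ G) v) ^ n = 1
      rw [← map_pow, hvn, _root_.map_one], _root_.map_one]
  haveI : Nonempty G := ⟨1⟩
  -- diagonal entries of M are all (u 1 : ℂ)
  have hv1 : ∀ x : G, v.coeff x = ((u.coeff x : ℤ) : ℂ) := hψ u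
  have hdiag : ∀ x : G, M x x = ((t : ℤ) : ℂ) := by
    intro x
    have h1 : M x x = b.repr (f (b x)) x := LinearMap.toMatrixAlgEquiv_apply b f x x
    have h2 : b x = MonoidAlgebra.single x 1 := MonoidAlgebra.basis_apply ℂ x
    have h3 : b.repr (f (b x)) x
        = (v * (MonoidAlgebra.single x 1 : MonoidAlgebra ℂ G)).coeff x := by
      rw [h2]; rfl
    rw [h1, h3, MonoidAlgebra.coeff_mul_single_apply, mul_inv_cancel, mul_one, hv1, htdef]
  have hcardpos : 0 < Fintype.card G := Fintype.card_pos
  have htrace : M.trace = (Fintype.card G : ℂ) * ((t : ℤ) : ℂ) := by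
    rw [Matrix.trace]
    have : ∀ x : G, M.diag x = ((t : ℤ) : ℂ) := fun x => hdiag x
    rw [Finset.sum_congr rfl fun x _ => this x, Finset.sum_const, Finset.card_univ,
      nsmul_eq_mul]
  set p : Polynomial ℂ := M.charpoly with hp
  have hpmonic : p.Monic := M.charpoly_monic
  have hsplits : p.Splits := IsAlgClosed.splits p
  have hcard : Multiset.card p.roots = Fintype.card G := by
    rw [(Polynomial.splits_iff_card_roots).mp hsplits, hp, Matrix.charpoly_natDegree_eq_dim]
  have hsum : p.roots.sum = (Fintype.card G : ℂ) * ((t : ℤ) : ℂ) := by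
    rw [← htrace, Matrix.trace_eq_sum_roots_charpoly]
  -- every root is an n-th root of unity
  have hroot_pow : ∀ z ∈ p.roots, z ^ n = 1 := by
    intro z hz
    have hz' : p.IsRoot z := (Polynomial.mem_roots'.mp hz).2
    have hdet : (z • (1 : Matrix G G ℂ) - M).det = 0 := by
      rw [← bh_eval_charpoly]; exact hz'
    obtain ⟨w, hw0, hw⟩ := (Matrix.exists_mulVec_eq_zero_iff).mpr hdet
    have hMw : M *ᵥ w = z • w := by
      rw [Matrix.sub_mulVec, Matrix.smul_mulVec, Matrix.one_mulVec, sub_eq_zero] at hw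
      exact hw.symm
    have hk : ∀ k : ℕ, (M ^ k) *ᵥ w = z ^ k • w := by
      intro k; induction k with
      | zero => simp [Matrix.one_mulVec]
      | succ k ih =>
        rw [pow_succ, ← Matrix.mulVec_mulVec, hMw, Matrix.mulVec_smul, ih, pow_succ,
          smul_smul, mul_comm]
    have hkn := hk n
    rw [hMn, Matrix.one_mulVec] at hkn
    have hz0 : (z ^ n - 1) • w = 0 := by
      rw [sub_smul, one_smul, ← hkn, sub_self]
    rcases smul_eq_zero.mp hz0 with h | h
    · exact sub_eq_zero.mp h
    · exact absurd h hw0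
  -- every root has absolute value 1
  have habs : ∀ z ∈ p.roots, ‖z‖ = 1 := by
    intro z hz
    have h1 : ‖z‖ ^ n = 1 := by
      rw [← norm_pow, hroot_pow z hz, norm_one]
    rcases (pow_eq_one_iff_of_ne_zero hn.ne').mp h1 with h | h
    · exact h
    · exfalso; have := norm_nonneg z; rw [h.1] at this; linarith
  have hre_le : ∀ z ∈ p.roots, |z.re| ≤ 1 := fun z hz =>
    (Complex.abs_re_le_norm z).trans_eq (habs z hz)
  -- real part of the trace identity
  have hre_sum : (p.roots.map Complex.re).sum = (Fintype.card G : ℝ) * (t : ℝ) := by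
    have h1 := congrArg Complex.re hsum
    have h2 : (p.roots.map Complex.re).sum = (p.roots.sum).re := by
      rw [← Complex.coe_reAddGroupHom, ← map_multiset_sum]
    rw [h2, h1]
    simp [Complex.mul_re]
  have hcard_re : Multiset.card (p.roots.map Complex.re) = Fintype.card G := by
    rw [Multiset.card_map, hcard]
  -- |t| ≤ 1, hence t = ± 1
  have hub : (Fintype.card G : ℝ) * (t : ℝ) ≤ (Fintype.card G : ℝ) * 1 := by
    rw [← hre_sum, mul_one]
    calc (p.roots.map Complex.re).sum
        ≤ Multiset.card (p.roots.map Complex.re) • (1 : ℝ) :=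
          Multiset.sum_le_card_nsmul _ _ fun x hx => by
            obtain ⟨z, hz, rfl⟩ := Multiset.mem_map.mp hx
            exact (le_abs_self _).trans (hre_le z hz)
      _ = (Fintype.card G : ℝ) := by rw [hcard_re, nsmul_eq_mul, mul_one]
  have hlb : (Fintype.card G : ℝ) * (-1) ≤ (Fintype.card G : ℝ) * (t : ℝ) := by
    rw [← hre_sum]
    calc (Fintype.card G : ℝ) * (-1)
        = Multiset.card (p.roots.map Complex.re) • (-1 : ℝ) := by
          rw [hcard_re, nsmul_eq_mul]
      _ ≤ (p.roots.map Complex.re).sum :=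
          Multiset.card_nsmul_le_sum fun x hx => by
            obtain ⟨z, hz, rfl⟩ := Multiset.mem_map.mp hx
            exact neg_le_of_abs_le (hre_le z hz)
  have hcpos : (0:ℝ) < (Fintype.card G : ℝ) := by exact_mod_cast hcardpos
  have ht_le : (t:ℝ) ≤ 1 := le_of_mul_le_mul_left hub hcpos
  have ht_ge : (-1:ℝ) ≤ (t:ℝ) := le_of_mul_le_mul_left hlb hcpos
  have ht1 : t = 1 ∨ t = -1 := by
    have h1 : t ≤ 1 := by exact_mod_cast ht_le
    have h2 : -1 ≤ t := by exact_mod_cast ht_ge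
    omega
  set ε : ℝ := (t : ℝ) with hεdef
  have hε2 : ε * ε = 1 := by rcases ht1 with h | h <;> simp [hεdef, h]
  -- all roots are equal to ε
  have hkey : ∀ z ∈ p.roots, z = (ε : ℂ) := by
    have hsum0 : (p.roots.map fun z => 1 - ε * z.re).sum = 0 := by
      have e1 : (p.roots.map fun z => 1 - ε * z.re).sum
          = (Multiset.card p.roots : ℝ) - ε * (p.roots.map Complex.re).sum := by
        induction p.roots using Multiset.induction with
        | empty => simp
        | cons a s ih =>
          simp only [Multiset.map_cons, Multiset.sum_cons, Multiset.card_cons, ih]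
          push_cast; ring
      rw [e1, hre_sum, hcard]
      have : ε * ((Fintype.card G : ℝ) * (t:ℝ)) = (Fintype.card G : ℝ) * (ε * ε) := by
        rw [hεdef]; ring
      rw [this, hε2, mul_one, sub_self]
    have hall := bh_multiset_zero (s := p.roots.map fun z => 1 - ε * z.re)
      (by
        intro x hx
        obtain ⟨z, hz, rfl⟩ := Multiset.mem_map.mp hx
        have h1 : |z.re| ≤ 1 := hre_le z hz
        have h2 : |ε| = 1 := by rcases ht1 with h | h <;> simp [hεdef, h]
        have : ε * z.re ≤ |ε * z.re| := le_abs_self _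
        rw [abs_mul, h2, one_mul] at this
        linarith)
      hsum0
    intro z hz
    have h0 : 1 - ε * z.re = 0 :=
      hall _ (Multiset.mem_map_of_mem _ hz)
    have hre : z.re = ε := by
      have : ε * (ε * z.re) = ε * 1 := by rw [← sub_eq_zero]; rw [sub_eq_zero.mp h0] ; ring
      rw [← mul_assoc, hε2, one_mul, mul_one] at this
      exact this
    have him : z.im = 0 := by
      have h1 : Complex.normSq z = 1 := by
        have := habs z hz
        rw [← Complex.sq_norm, this, one_pow]
      rw [Complex.normSq_apply, hre] at h1
      nlinarith
    apply Complex.ext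
    · simp [hre]
    · simp [him]
  -- minimal polynomial argument: M is the scalar matrix ε • 1
  have hint : IsIntegral ℂ M := ⟨p, hpmonic, M.aeval_self_charpoly⟩
  set q : Polynomial ℂ := minpoly ℂ M with hq
  have hqdvd : q ∣ (Polynomial.X ^ n - Polynomial.C 1 : Polynomial ℂ) := by
    apply minpoly.dvd
    rw [map_sub, map_pow, Polynomial.aeval_X, Polynomial.aeval_C]
    simp [hMn]
  have hnne : ((n : ℂ)) ≠ 0 := by exact_mod_cast hn.ne'
  have hsep : q.Separable :=
    (Polynomial.separable_X_pow_sub_C (1:ℂ) hnne one_ne_zero).of_dvd hqdvd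
  have hqmonic : q.Monic := minpoly.monic hint
  have hqdeg : 0 < q.natDegree := minpoly.natDegree_pos hint
  have hqsplits : q.Splits := IsAlgClosed.splits q
  have hqcard : Multiset.card q.roots = q.natDegree :=
    (Polynomial.splits_iff_card_roots).mp hqsplits
  have hqsub : ∀ z ∈ q.roots, z = (ε : ℂ) := by
    intro z hz
    apply hkey
    have hzr : q.IsRoot z := (Polynomial.mem_roots'.mp hz).2
    obtain ⟨r, hr⟩ := M.minpoly_dvd_charpoly
    have hpz : p.IsRoot z := by
      rw [hp, hr, Polynomial.IsRoot, Polynomial.eval_mul, hzr.eq_zero, zero_mul]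
    exact Polynomial.mem_roots'.mpr ⟨hpmonic.ne_zero, hpz⟩
  have hnodup : q.roots.Nodup := Polynomial.nodup_roots hsep
  have hrep : q.roots = Multiset.replicate (Multiset.card q.roots) ((ε : ℂ)) :=
    Multiset.eq_replicate_of_mem hqsub
  have hcle : Multiset.card q.roots ≤ 1 := by
    have hcount : Multiset.count ((ε : ℂ)) q.roots ≤ 1 :=
      Multiset.nodup_iff_count_le_one.mp hnodup _
    rwa [hrep, Multiset.count_replicate_self] at hcount
  have hc1 : Multiset.card q.roots = 1 := le_antisymm hcle (by rw [hqcard]; exact hqdeg)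
  have hroots_eq : q.roots = {(ε : ℂ)} := by
    rw [hrep, hc1, Multiset.replicate_one]
  have hqeq : q = Polynomial.X - Polynomial.C ((ε : ℂ)) := by
    have he := hqsplits.eq_prod_roots_of_monic hqmonic
    rw [hroots_eq] at he
    simpa using he
  have hM : M = algebraMap ℂ (Matrix G G ℂ) ((ε : ℂ)) := by
    have h0 := minpoly.aeval ℂ M
    rw [← hq, hqeq, map_sub, Polynomial.aeval_X, Polynomial.aeval_C] at h0
    rwa [sub_eq_zero] at h0
  -- transfer back to the group algebra: v = ε • 1
  have hfeq : f = algebraMap ℂ (Module.End ℂ (MonoidAlgebra ℂ G)) ((ε : ℂ)) := by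
    apply (LinearMap.toMatrixAlgEquiv b).injective
    rw [AlgEquiv.commutes]
    exact hM
  have hveq : v = ((ε : ℂ)) • (1 : MonoidAlgebra ℂ G) := by
    have h1 : f 1 = v * 1 := rfl
    rw [mul_one] at h1
    rw [← h1, hfeq, Module.algebraMap_end_apply]
  -- coefficients of u vanish off the identity
  have hcoeff : ∀ x : G, x ≠ 1 → u.coeff x = 0 := by
    intro x hx
    have h1 : v.coeff x = 0 := by
      rw [hveq, MonoidAlgebra.one_def]
      rw [MonoidAlgebra.coeff_smul_apply, MonoidAlgebra.coeff_single_apply, if_neg (Ne.symm hx), smul_zero]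
    rw [hv1 x] at h1
    exact_mod_cast h1
  have hueq : u = MonoidAlgebra.single 1 t := by
    ext x
    by_cases hx : x = 1
    · subst hx; simp [MonoidAlgebra.coeff_single_apply, htdef]
    · rw [hcoeff x hx, MonoidAlgebra.coeff_single_apply, if_neg (Ne.symm hx)]
  rw [hueq] at haug
  rw [MonoidAlgebra.coeff_single, Finsupp.sum_single_index rfl] at haug
  apply hne
  rw [hueq, haug, MonoidAlgebra.one_def]
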